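/- arXiv:0903.1785 — 18 statements merged into one kernel-verified Lean document; each statement's English description precedes it below -/
import Mathlib

section
/- Let S be a semigroup and a, d, b ∈ S. If b satisfies bad = d = dab and b ∈ dS ∩ Sd, then b is an outer inverse of a (i.e., bab = b) and b is H-related to d (i.e., b and d generate the same principal left ideal and the same principal right ideal). -/
variable {S : Type*} [Semigroup S]

/-- `x` is below `y` in the L-preorder: `x ∈ S¹y`. -/
def lle (x y : S) : Prop := x = y ∨ ∃ s, x = s * y
/-- `x` is below `y` in the R-preorder: `x ∈ yS¹`. -/
def rle (x y : S) : Prop := x = y ∨ ∃ s, x = y * s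
/-- Green's L relation: `S¹x = S¹y`. -/
def lrel (x y : S) : Prop := lle x y ∧ lle y x
/-- Green's R relation: `xS¹ = yS¹`. -/
def rrel (x y : S) : Prop := rle x y ∧ rle y x
/-- Green's H relation. -/
def hrel (x y : S) : Prop := lrel x y ∧ rrel x y
/-- `b` is an inverse of `a` along `d`. -/
def invAlong (a d b : S) : Prop :=
  b * a * d = d ∧ d * a * b = d ∧ (∃ s, b = d * s) ∧ (∃ t, b = t * d)
/-- The H-class of `x`. -/
def hClass (x : S) : Set S := {y | hrel y x}
/-- A subset of `S` is a group under the restricted multiplication. -/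
def isGroupSet (H : Set S) : Prop :=
  (∀ x ∈ H, ∀ y ∈ H, x * y ∈ H) ∧
  ∃ e ∈ H, (∀ x ∈ H, e * x = x ∧ x * e = x) ∧ ∀ x ∈ H, ∃ y ∈ H, x * y = e ∧ y * x = e

theorem stmt0 (a d b : S) (h1 : b * a * d = d) (h2 : d * a * b = d)
    (h3 : ∃ s, b = d * s) (h4 : ∃ t, b = t * d) :
    b * a * b = b ∧ hrel b d := by
  obtain ⟨s, hs⟩ := h3
  obtain ⟨t, ht⟩ := h4
  refine ⟨?_, ⟨⟨Or.inr ⟨t, ht⟩, Or.inr ⟨d * a, h2.symm⟩⟩,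
    ⟨Or.inr ⟨s, hs⟩, Or.inr ⟨a * d, by rw [← mul_assoc]; exact h1.symm⟩⟩⟩⟩
  nth_rewrite 2 [hs]
  rw [← mul_assoc, h1, ← hs]
end

section
/- Let S be a semigroup and a, d, b ∈ S. If b is an outer inverse of a (bab = b) and b is H-related to d, then ba is an idempotent in the R-class of d and b is both an inner and outer inverse of a(ba), i.e., (aba)b(aba) = aba and b(aba)b = b. -/
variable {S : Type*} [Semigroup S]

theorem stmt1 (a d b : S) (h1 : b * a * b = b) (h2 : hrel b d) :
    (b * a) * (b * a) = b * a ∧ rrel (b * a) d ∧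
    (a * b * a) * b * (a * b * a) = a * b * a ∧ b * (a * b * a) * b = b := by
  obtain ⟨_, hr1, hr2⟩ := h2
  have h1' : b * (a * b) = b := by rw [← mul_assoc]; exact h1
  have idem : (b * a) * (b * a) = b * a := by
    calc (b * a) * (b * a) = (b * (a * b)) * a := by simp [mul_assoc]
      _ = b * a := by rw [h1']
  refine ⟨idem, ⟨?_, ?_⟩, ?_, ?_⟩
  · rcases hr1 with h | ⟨s, hs⟩
    · right; exact ⟨a, by rw [h]⟩
    · right; exact ⟨s * a, by rw [hs, mul_assoc]⟩
  · rcases hr2 with h | ⟨s, hs⟩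
    · right; refine ⟨b, ?_⟩
      rw [h, mul_assoc, h1']
    · right; refine ⟨b * s, ?_⟩
      rw [hs]
      exact (calc b * a * (b * s) = (b * (a * b)) * s := by simp [mul_assoc]
        _ = b * s := by rw [h1']).symm
  · calc (a * b * a) * b * (a * b * a)
        = a * ((b * (a * b)) * (a * (b * a))) := by simp [mul_assoc]
      _ = a * (b * (a * (b * a))) := by rw [h1']
      _ = a * ((b * (a * b)) * a) := by simp [mul_assoc]
      _ = a * (b * a) := by rw [h1']
      _ = a * b * a := by simp [mul_assoc]
  · have e : b * (a * b * a) * b = (b * (a * b)) * (a * b) := by simp [mul_assoc]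
    rw [e, h1', h1']
end

section
/- Let S be a semigroup and a, d, b ∈ S. Suppose there is an idempotent e in the R-class of d such that b is both an inner and outer inverse of ae and b H d. Then there exists an idempotent f in the L-class of d such that b is both an inner and outer inverse of fa. -/
variable {S : Type*} [Semigroup S]

theorem stmt2 (a d b e : S) (he : e * e = e) (hed : rrel e d)
    (hi : (a * e) * b * (a * e) = a * e) (ho : b * (a * e) * b = b) (hbd : hrel b d) :
    ∃ f, f * f = f ∧ lrel f d ∧ (f * a) * b * (f * a) = f * a ∧ b * (f * a) * b = b := by
  obtain ⟨⟨hbld, hdlb⟩, ⟨hbrd, hdrb⟩⟩ := hbd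
  -- e * d = d
  have hedd : e * d = d := by
    rcases hed.2 with h | ⟨t, ht⟩
    · rw [h]; exact he
    · rw [ht, ← mul_assoc, he]
  -- e * b = b
  have heb : e * b = b := by
    rcases hbrd with h | ⟨s, hs⟩
    · rw [h]; exact hedd
    · rw [hs, ← mul_assoc, hedd]
  -- b * (a * b) = b
  have hbab : b * (a * b) = b := by
    have h := ho
    simp only [mul_assoc] at h
    rwa [heb] at h
  have hkey : ∀ y : S, b * (a * (b * y)) = b * y := by
    intro y
    rw [← mul_assoc a b y, ← mul_assoc, hbab]
  refine ⟨a * b, ?_, ⟨?_, ?_⟩, ?_, ?_⟩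
  · simp only [mul_assoc]; rw [hbab]
  · -- lle (a*b) d
    rcases hbld with h | ⟨s, hs⟩
    · exact Or.inr ⟨a, by rw [h]⟩
    · exact Or.inr ⟨a * s, by rw [hs, mul_assoc]⟩
  · -- lle d (a*b)
    rcases hdlb with h | ⟨s, hs⟩
    · exact Or.inr ⟨b, by rw [h]; exact hbab.symm⟩
    · refine Or.inr ⟨s * b, ?_⟩
      calc d = s * b := hs
        _ = s * (b * (a * b)) := by rw [hbab]
        _ = s * b * (a * b) := by rw [mul_assoc]
  · simp only [mul_assoc]
    rw [hkey, hkey]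
  · simp only [mul_assoc]
    rw [hkey, hbab]
end

section
/- Let S be a semigroup and a, d, b ∈ S. Suppose there is an idempotent f in the L-class of d such that b is both an inner and outer inverse of fa, and b H d. Then bad = d = dab and b ∈ dS ∩ Sd. -/
variable {S : Type*} [Semigroup S]

theorem stmt3 (a d b f : S) (hf : f * f = f) (hfd : lrel f d)
    (hi : (f * a) * b * (f * a) = f * a) (ho : b * (f * a) * b = b) (hbd : hrel b d) :
    b * a * d = d ∧ d * a * b = d ∧ (∃ s, b = d * s) ∧ (∃ t, b = t * d) := by
  obtain ⟨⟨hbLd, hdLb⟩, ⟨hbRd, hdRb⟩⟩ := hbd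
  obtain ⟨hfLd, hdLf⟩ := hfd
  have hdf : d * f = d := by
    rcases hdLf with h | ⟨s, hs⟩
    · rw [h]; exact hf
    · rw [hs, mul_assoc, hf]
  have hbf : b * f = b := by
    rcases hbLd with h | ⟨u, hu⟩
    · rw [h]; exact hdf
    · rw [hu, mul_assoc, hdf]
  have hbab : b * a * b = b := by
    have : b * a * b = b * (f * a) * b := by rw [← mul_assoc, hbf]
    rw [this, ho]
  refine ⟨?_, ?_, ?_, ?_⟩
  · rcases hdRb with h | ⟨v, hv⟩
    · rw [h]; exact hbab
    · rw [hv, ← mul_assoc, hbab]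
  · rcases hdLb with h | ⟨u, hu⟩
    · rw [h]; exact hbab
    · rw [hu, mul_assoc u b a, mul_assoc u (b * a) b, hbab]
  · rcases hbRd with h | ⟨s, hs⟩
    · exact ⟨a * b, by rw [← mul_assoc, ← h, hbab]⟩
    · exact ⟨s, hs⟩
  · rcases hbLd with h | ⟨t, ht⟩
    · exact ⟨b * a, by rw [← h, hbab]⟩
    · exact ⟨t, ht⟩
end

section
/- Let S be a semigroup and a, d ∈ S. The following are equivalent: (1) there exists b ∈ S with bad = d = dab and b ∈ dS ∩ Sd; (2) there exists b ∈ S with bab = b and b H d. Moreover any b satisfying one condition satisfies the other. -/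
variable {S : Type*} [Semigroup S]

theorem stmt4 (a d : S) :
    ((∃ b, invAlong a d b) ↔ (∃ b, b * a * b = b ∧ hrel b d)) ∧
    (∀ b, invAlong a d b ↔ (b * a * b = b ∧ hrel b d)) := by
  have key : ∀ b : S, invAlong a d b ↔ (b * a * b = b ∧ hrel b d) := by
    intro b
    constructor
    · rintro ⟨h1, h2, ⟨s, hs⟩, ⟨t, ht⟩⟩
      refine ⟨?_, ⟨Or.inr ⟨t, ht⟩, Or.inr ⟨d * a, h2.symm⟩⟩,
        ⟨Or.inr ⟨s, hs⟩, Or.inr ⟨a * d, by rw [← mul_assoc]; exact h1.symm⟩⟩⟩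
      calc b * a * b = b * a * (d * s) := by rw [hs]
        _ = (b * a * d) * s := by simp [mul_assoc]
        _ = d * s := by rw [h1]
        _ = b := hs.symm
    · rintro ⟨hbab, ⟨hbd_l, hdb_l⟩, ⟨hbd_r, hdb_r⟩⟩
      refine ⟨?_, ?_, ?_, ?_⟩
      · rcases hdb_r with h | ⟨u, hu⟩
        · rw [← h] at hbab ⊢; exact hbab
        · rw [hu, ← mul_assoc, hbab]
      · rcases hdb_l with h | ⟨v, hv⟩
        · rw [← h] at hbab ⊢; exact hbab
        · rw [hv, mul_assoc, mul_assoc, ← mul_assoc b a b, hbab]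
      · rcases hbd_r with h | ⟨s, hs⟩
        · exact ⟨a * b, by rw [h] at hbab ⊢; rw [← mul_assoc]; exact hbab.symm⟩
        · exact ⟨s, hs⟩
      · rcases hbd_l with h | ⟨t, ht⟩
        · exact ⟨b * a, by rw [h] at hbab ⊢; exact hbab.symm⟩
        · exact ⟨t, ht⟩
  exact ⟨⟨fun ⟨b, hb⟩ => ⟨b, (key b).mp hb⟩, fun ⟨b, hb⟩ => ⟨b, (key b).mpr hb⟩⟩, key⟩
end

section
/- Let S be a semigroup and a, d ∈ S. If b is an inverse of a along d (i.e., bad = d = dab and b ∈ dS ∩ Sd), then ba is an idempotent in the R-class of d, and ab is an idempotent in the L-class of d. -/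
variable {S : Type*} [Semigroup S]

theorem stmt5 (a d b : S) (hb : invAlong a d b) :
    (b * a) * (b * a) = b * a ∧ rrel (b * a) d ∧
    (a * b) * (a * b) = a * b ∧ lrel (a * b) d := by
  obtain ⟨h1, h2, ⟨s, hs⟩, ⟨t, ht⟩⟩ := hb
  refine ⟨?_, ⟨?_, ?_⟩, ?_, ?_, ?_⟩
  · calc (b * a) * (b * a) = t * (d * a * b) * a := by rw [ht]; simp [mul_assoc]
    _ = b * a := by rw [h2, ht]
  · exact Or.inr ⟨s * a, by rw [hs, mul_assoc]⟩
  · exact Or.inr ⟨d, h1.symm⟩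
  · calc (a * b) * (a * b) = a * (b * a * d) * s := by rw [hs]; simp [mul_assoc]
    _ = a * b := by rw [h1, hs, mul_assoc]
  · exact Or.inr ⟨a * t, by rw [ht, mul_assoc]⟩
  · exact Or.inr ⟨d, by rw [← mul_assoc]; exact h2.symm⟩
end

section
/- Let S be a semigroup and a, d ∈ S. If b and c are both inverses of a along d (i.e., bad = d = dab, b ∈ dS ∩ Sd, and cad = d = dac, c ∈ dS ∩ Sd), then b = c. -/
variable {S : Type*} [Semigroup S]

theorem stmt6 (a d b c : S) (hb : invAlong a d b) (hc : invAlong a d c) : b = c := by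
  obtain ⟨hbad, hdab, ⟨s1, hs1⟩, ⟨t1, ht1⟩⟩ := hb
  obtain ⟨hcad, hdac, ⟨s2, hs2⟩, ⟨t2, ht2⟩⟩ := hc
  calc b = t1 * (d * a * c) := by rw [hdac, ← ht1]
  _ = b * a * (d * s2) := by rw [ht1, ← hs2]; simp only [mul_assoc]
  _ = c := by rw [← mul_assoc, hbad, ← hs2]
end

section
/- Let S be a semigroup and a, d ∈ S. Then a has an inner inverse along d (an inverse b of a along d with additionally aba = a) if and only if ad ∈ R_a ∩ L_d and da ∈ R_d ∩ L_a (i.e., ad and da are trace products). -/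
variable {S : Type*} [Semigroup S]

theorem stmt7 (a d : S) :
    (∃ b, invAlong a d b ∧ a * b * a = a) ↔
    (rrel (a * d) a ∧ lrel (a * d) d ∧ rrel (d * a) d ∧ lrel (d * a) a) := by
  constructor
  · rintro ⟨b, ⟨hbad, hdab, ⟨s₀, hs₀⟩, ⟨t₀, ht₀⟩⟩, haba⟩
    refine ⟨⟨Or.inr ⟨d, rfl⟩, Or.inr ⟨s₀ * a, ?_⟩⟩,
            ⟨Or.inr ⟨a, rfl⟩, Or.inr ⟨b, ?_⟩⟩,
            ⟨Or.inr ⟨a, rfl⟩, Or.inr ⟨b, hdab.symm⟩⟩,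
            ⟨Or.inr ⟨d, rfl⟩, Or.inr ⟨a * t₀, ?_⟩⟩⟩
    · calc a = a * b * a := haba.symm
        _ = a * (d * s₀) * a := by rw [hs₀]
        _ = a * d * (s₀ * a) := by simp [mul_assoc]
    · calc d = b * a * d := hbad.symm
        _ = b * (a * d) := by rw [mul_assoc]
    · calc a = a * b * a := haba.symm
        _ = a * (t₀ * d) * a := by rw [ht₀]
        _ = a * t₀ * (d * a) := by simp [mul_assoc]
  · rintro ⟨⟨-, hra⟩, ⟨-, hld⟩, ⟨-, hrd⟩, ⟨-, hla⟩⟩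
    obtain ⟨s, hs⟩ : ∃ s, a = a * d * s := by
      rcases hra with h | h
      · exact ⟨d, by rw [← h, ← h]⟩
      · exact h
    obtain ⟨t, ht⟩ : ∃ t, d = t * (a * d) := by
      rcases hld with h | h
      · exact ⟨a, by rw [← h, ← h]⟩
      · exact h
    obtain ⟨u, hu⟩ : ∃ u, d = d * a * u := by
      rcases hrd with h | h
      · exact ⟨a, by rw [← h, ← h]⟩
      · exact h
    obtain ⟨v, hv⟩ : ∃ v, a = v * (d * a) := by
      rcases hla with h | h
      · exact ⟨d, by rw [← h, ← h]⟩
      · exact h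
    have hdab : d * a * (d * (s * u)) = d := by
      calc d * a * (d * (s * u)) = d * (a * d * s * u) := by simp [mul_assoc]
        _ = d * (a * u) := by rw [← hs]
        _ = d * a * u := by rw [mul_assoc]
        _ = d := hu.symm
    have hyd : t * v * d = d * (s * u) := by
      calc t * v * d = t * v * (d * a * (d * (s * u))) := by rw [hdab]
        _ = t * (v * (d * a)) * (d * (s * u)) := by simp [mul_assoc]
        _ = t * a * (d * (s * u)) := by rw [← hv]
        _ = t * (a * d) * (s * u) := by simp [mul_assoc]
        _ = d * (s * u) := by rw [← ht]
    have hbad : d * (s * u) * a * d = d := by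
      calc d * (s * u) * a * d = t * v * d * a * d := by rw [← hyd]
        _ = t * (v * (d * a)) * d := by simp [mul_assoc]
        _ = t * a * d := by rw [← hv]
        _ = t * (a * d) := by rw [mul_assoc]
        _ = d := ht.symm
    have haba : a * (d * (s * u)) * a = a := by
      nth_rewrite 2 [hs]
      calc a * (d * (s * u)) * (a * d * s)
          = a * (d * (s * u) * a * d) * s := by simp [mul_assoc]
        _ = a * d * s := by rw [hbad]
        _ = a := hs.symm
    exact ⟨d * (s * u), ⟨hbad, hdab, ⟨s * u, rfl⟩, ⟨t * v, hyd.symm⟩⟩, haba⟩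
end

section
/- Let S be a semigroup and a, d ∈ S. If a is invertible along d, then ad L d and the H-class of ad is a group (under the semigroup multiplication restricted to it). -/
variable {S : Type*} [Semigroup S]

lemma lle_trans {x y z : S} (h1 : lle x y) (h2 : lle y z) : lle x z := by
  rcases h1 with rfl | ⟨s, rfl⟩ <;> rcases h2 with rfl | ⟨t, rfl⟩
  · exact Or.inl rfl
  · exact Or.inr ⟨t, rfl⟩
  · exact Or.inr ⟨s, rfl⟩
  · exact Or.inr ⟨s * t, (mul_assoc ..).symm⟩

lemma rle_trans {x y z : S} (h1 : rle x y) (h2 : rle y z) : rle x z := by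
  rcases h1 with rfl | ⟨s, rfl⟩ <;> rcases h2 with rfl | ⟨t, rfl⟩
  · exact Or.inl rfl
  · exact Or.inr ⟨t, rfl⟩
  · exact Or.inr ⟨s, rfl⟩
  · exact Or.inr ⟨t * s, mul_assoc ..⟩

lemma hrel_trans {x y z : S} (h1 : hrel x y) (h2 : hrel y z) : hrel x z :=
  ⟨⟨lle_trans h1.1.1 h2.1.1, lle_trans h2.1.2 h1.1.2⟩,
   ⟨rle_trans h1.2.1 h2.2.1, rle_trans h2.2.2 h1.2.2⟩⟩

lemma hrel_symm {x y : S} (h : hrel x y) : hrel y x :=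
  ⟨⟨h.1.2, h.1.1⟩, ⟨h.2.2, h.2.1⟩⟩

lemma hrel_refl (x : S) : hrel x x :=
  ⟨⟨Or.inl rfl, Or.inl rfl⟩, ⟨Or.inl rfl, Or.inl rfl⟩⟩

lemma hClass_eq {x y : S} (h : hrel x y) : hClass x = hClass y := by
  ext z
  exact ⟨fun hz => hrel_trans hz h, fun hz => hrel_trans hz (hrel_symm h)⟩

section idem

variable {e : S}

lemma mul_id_of_mem (he : e * e = e) {x : S} (hx : x ∈ hClass e) : x * e = x := by
  rcases hx.1.1 with rfl | ⟨s, rfl⟩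
  · exact he
  · rw [mul_assoc, he]

lemma id_mul_of_mem (he : e * e = e) {x : S} (hx : x ∈ hClass e) : e * x = x := by
  rcases hx.2.1 with rfl | ⟨s, rfl⟩
  · exact he
  · rw [← mul_assoc, he]

lemma exists_left (he : e * e = e) {x : S} (hx : x ∈ hClass e) : ∃ u, e = u * x := by
  rcases hx.1.2 with h | h
  · exact ⟨e, by rw [← h, he]⟩
  · exact h

lemma exists_right (he : e * e = e) {x : S} (hx : x ∈ hClass e) : ∃ v, e = x * v := by
  rcases hx.2.2 with h | h
  · exact ⟨e, by rw [← h, he]⟩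
  · exact h

/-- Every element of the H-class of an idempotent has an inverse in it. -/
lemma exists_inv_mem (he : e * e = e) {x : S} (hx : x ∈ hClass e) :
    ∃ y ∈ hClass e, x * y = e ∧ y * x = e := by
  obtain ⟨u, hu⟩ := exists_left he hx
  obtain ⟨v, hv⟩ := exists_right he hx
  have hex : e * x = x := id_mul_of_mem he hx
  have hxe : x * e = x := mul_id_of_mem he hx
  -- left inverse
  have hL : (e * u * e) * x = e := by
    rw [mul_assoc, hex, mul_assoc, ← hu, he]
  -- right inverse
  have hR : x * (e * (v * e)) = e := by
    rw [← mul_assoc, hxe, ← mul_assoc, ← hv, he]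
  -- the two coincide
  have heq : e * u * e = e * (v * e) := by
    have h1 : (e * u * e) * (x * (e * (v * e))) = e * u * e * e := by rw [hR]
    have h2 : (e * u * e) * x * (e * (v * e)) = e * (e * (v * e)) := by rw [hL]
    calc e * u * e = e * u * e * e := by conv_rhs => rw [mul_assoc, he]
      _ = (e * u * e) * (x * (e * (v * e))) := h1.symm
      _ = (e * u * e) * x * (e * (v * e)) := (mul_assoc ..).symm
      _ = e * (e * (v * e)) := h2
      _ = e * e * (v * e) := (mul_assoc ..).symm
      _ = e * (v * e) := by rw [he]
  refine ⟨e * u * e, ?_, by rw [heq]; exact hR, hL⟩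
  refine ⟨⟨Or.inr ⟨e * u, rfl⟩, Or.inr ⟨x, by rw [heq]; exact hR.symm⟩⟩,
          ⟨Or.inr ⟨u * e, mul_assoc ..⟩, Or.inr ⟨x, hL.symm⟩⟩⟩

lemma hClass_idem_group (he : e * e = e) : isGroupSet (hClass e) := by
  refine ⟨?_, e, hrel_refl e,
    fun x hx => ⟨id_mul_of_mem he hx, mul_id_of_mem he hx⟩,
    fun x hx => exists_inv_mem he hx⟩
  intro x hx y hy
  obtain ⟨x', hx', hxx', hx'x⟩ := exists_inv_mem he hx
  obtain ⟨y', hy', hyy', hy'y⟩ := exists_inv_mem he hy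
  have h1 : (x * y) * (y' * x') = e := by
    have : x * (y * y') * x' = e := by rw [hyy', mul_id_of_mem he hx, hxx']
    calc (x * y) * (y' * x') = x * (y * y') * x' := by
          rw [mul_assoc, mul_assoc, mul_assoc]
      _ = e := this
  have h2 : (y' * x') * (x * y) = e := by
    have : y' * (x' * x) * y = e := by rw [hx'x, mul_id_of_mem he hy', hy'y]
    calc (y' * x') * (x * y) = y' * (x' * x) * y := by
          rw [mul_assoc, mul_assoc, mul_assoc]
      _ = e := this
  exact ⟨⟨Or.inr ⟨x * y, by rw [mul_assoc, mul_id_of_mem he hy]⟩,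
          Or.inr ⟨y' * x', h2.symm⟩⟩,
         ⟨Or.inr ⟨x * y, by rw [← mul_assoc, id_mul_of_mem he hx]⟩,
          Or.inr ⟨y' * x', h1.symm⟩⟩⟩

end idem

theorem stmt8 (a d : S) (h : ∃ b, invAlong a d b) :
    lrel (a * d) d ∧ isGroupSet (hClass (a * d)) := by
  obtain ⟨b, h1, h2, ⟨s, hs⟩, ⟨t, ht⟩⟩ := h
  have h1' : b * (a * d) = d := by rw [← mul_assoc]; exact h1
  have h2' : d * (a * b) = d := by rw [← mul_assoc]; exact h2
  constructor
  · exact ⟨Or.inr ⟨a, rfl⟩, Or.inr ⟨b, h1'.symm⟩⟩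
  · -- e = a * b is an idempotent H-related to a * d
    have key : b * (a * b) = b := by
      nth_rewrite 2 [hs]
      rw [show a * (d * s) = a * d * s from (mul_assoc ..).symm, ← mul_assoc, h1', ← hs]
    have hidem : (a * b) * (a * b) = a * b := by
      rw [mul_assoc, key]
    have hab : hrel (a * b) (a * d) := by
      refine ⟨⟨Or.inr ⟨a * (t * b), ?_⟩, Or.inr ⟨a * d, ?_⟩⟩,
              ⟨Or.inr ⟨s, ?_⟩, Or.inr ⟨a * d, ?_⟩⟩⟩
      · rw [mul_assoc, mul_assoc, h1', ← ht]
      · rw [mul_assoc, h2']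
      · rw [mul_assoc, ← hs]
      · rw [mul_assoc, h1']
    rw [hClass_eq (hrel_symm hab)]
    exact hClass_idem_group hidem
end

section
/- Let S be a semigroup and a, d ∈ S. If da R d and the H-class of da is a group with group inverse operation (da)^♯ for da, then b = (da)^♯ d is the inverse of a along d, i.e., bad = d = dab and b ∈ dS ∩ Sd. -/
variable {S : Type*} [Semigroup S]

theorem stmt10 (a d h : S) (hR : rrel (d * a) d) (hG : isGroupSet (hClass (d * a)))
    (hsharp : (d * a) * h * (d * a) = d * a ∧ h * (d * a) * h = h ∧ (d * a) * h = h * (d * a)) :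
    invAlong a d (h * d) := by
  obtain ⟨h1, h2, h3⟩ := hsharp
  have key : d * a * h * d = d := by
    rcases hR.2 with hd | ⟨s, hd⟩
    · nth_rewrite 2 [hd]; rw [h1, ← hd]
    · nth_rewrite 2 [hd]
      rw [show d * a * h * (d * a * s) = d * a * h * (d * a) * s by simp [mul_assoc], h1, ← hd]
  refine ⟨?_, ?_, ?_, ⟨h, rfl⟩⟩
  · calc h * d * a * d = h * (d * a) * d := by simp [mul_assoc]
      _ = d * a * h * d := by rw [h3]
      _ = d := key
  · calc d * a * (h * d) = d * a * h * d := by simp [mul_assoc]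
      _ = d := key
  · rcases hR.2 with hd | ⟨s, hd⟩
    · refine ⟨a * h, ?_⟩
      nth_rewrite 1 [hd]
      rw [← h3]; simp [mul_assoc]
    · refine ⟨a * h * s, ?_⟩
      nth_rewrite 1 [hd]
      rw [show h * (d * a * s) = h * (d * a) * s by simp [mul_assoc], ← h3]
      simp [mul_assoc]
end

section
/- Let S be a semigroup and a, d ∈ S. If a is invertible along d with inverse b, then its inverse satisfies b = d(ad)^♯ = (da)^♯ d, where (ad)^♯ and (da)^♯ are the group inverses of ad and da in their (group) H-classes. -/
variable {S : Type*} [Semigroup S]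

theorem stmt11 (a d b h k : S) (hb : invAlong a d b)
    (hh : (a * d) * h * (a * d) = a * d ∧ h * (a * d) * h = h ∧ (a * d) * h = h * (a * d))
    (hk : (d * a) * k * (d * a) = d * a ∧ k * (d * a) * k = k ∧ (d * a) * k = k * (d * a)) :
    b = d * h ∧ b = k * d := by
  obtain ⟨h1, h2, ⟨s, hs⟩, ⟨t, ht⟩⟩ := hb
  obtain ⟨hh1, hh2, hh3⟩ := hh
  obtain ⟨hk1, hk2, hk3⟩ := hk
  have star : d * (h * (a * d)) = d := by
    calc d * (h * (a * d)) = b * a * d * (h * (a * d)) := by rw [h1]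
      _ = b * (a * d * h * (a * d)) := by simp only [mul_assoc]
      _ = b * (a * d) := by rw [hh1]
      _ = d := by rw [← mul_assoc b a d, h1]
  have star2 : d * a * k * d = d := by
    calc d * a * k * d = d * a * k * (d * a * b) := by rw [h2]
      _ = d * a * k * (d * a) * b := by simp only [mul_assoc]
      _ = d * a * b := by rw [hk1]
      _ = d := h2
  constructor
  · calc b = t * d := ht
      _ = t * (d * (h * (a * d))) := by rw [star]
      _ = t * d * (h * (a * d)) := by rw [mul_assoc]
      _ = b * (h * (a * d)) := by rw [← ht]
      _ = b * (a * d * h) := by rw [hh3]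
      _ = b * (a * d) * h := by rw [mul_assoc b (a * d) h]
      _ = d * h := by rw [← mul_assoc b a d, h1]
  · calc b = d * s := hs
      _ = d * a * k * d * s := by rw [star2]
      _ = d * a * k * (d * s) := by rw [mul_assoc (d * a * k) d s]
      _ = d * a * k * b := by rw [← hs]
      _ = k * (d * a) * b := by rw [hk3]
      _ = k * (d * a * b) := by rw [mul_assoc k (d * a) b]
      _ = k * d := by rw [h2]
end

section
/- Let S be a semigroup, a, d ∈ S, and suppose b is the inverse of a along d (bad = d = dab, b ∈ dS ∩ Sd). Then b lies in the bicommutant of {a, d}: every c ∈ S commuting with both a and d also commutes with b. -/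
variable {S : Type*} [Semigroup S]

theorem stmt12 (a d b : S) (hb : invAlong a d b) :
    ∀ c, c * a = a * c → c * d = d * c → c * b = b * c := by
  obtain ⟨h1, h2, ⟨s, hs⟩, ⟨t, ht⟩⟩ := hb
  intro c hca hcd
  have key1 : c * b = b * a * (c * b) := by
    calc c * b = c * (d * s) := by rw [hs]
      _ = c * d * s := by rw [mul_assoc]
      _ = d * c * s := by rw [hcd]
      _ = b * a * d * c * s := by rw [h1]
      _ = b * a * (d * c * s) := by simp only [mul_assoc]
      _ = b * a * (c * d * s) := by rw [hcd]
      _ = b * a * (c * (d * s)) := by simp only [mul_assoc]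
      _ = b * a * (c * b) := by rw [hs]
  have key2 : b * c = b * a * (c * b) := by
    calc b * c = t * d * c := by rw [ht]
      _ = t * (d * c) := by rw [mul_assoc]
      _ = t * (c * d) := by rw [hcd]
      _ = t * (c * (d * a * b)) := by rw [h2]
      _ = t * c * d * a * b := by simp only [mul_assoc]
      _ = t * (c * d) * a * b := by rw [mul_assoc t c d]
      _ = t * (d * c) * a * b := by rw [hcd]
      _ = t * d * c * a * b := by rw [← mul_assoc t d c]
      _ = b * (c * a) * b := by rw [ht, mul_assoc (t * d) c a]
      _ = b * (a * c) * b := by rw [hca]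
      _ = b * a * (c * b) := by simp only [mul_assoc]
  rw [key1, ← key2]
end

section
/- Let S be a semigroup and a ∈ S. Then a has a group inverse (an element b with aba = a, bab = b, ab = ba) if and only if a is invertible along a itself, and in that case the inverse along a equals the group inverse and is inner. -/
variable {S : Type*} [Semigroup S]

lemma invAlong_group (a b : S) (h : invAlong a a b) :
    a * b * a = a ∧ b * a * b = b ∧ a * b = b * a := by
  obtain ⟨h1, h2, ⟨s, hs⟩, ⟨t, ht⟩⟩ := h
  have hab : a * b = b * a := by
    conv_lhs => rw [← h1]
    rw [mul_assoc, mul_assoc, ← mul_assoc a a b, h2]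
  refine ⟨?_, ?_, hab⟩
  · rw [hab, h1]
  · have key : b * a * (a * s) = a * s := by rw [← mul_assoc, h1]
    nth_rewrite 2 [hs]
    rw [key, ← hs]

theorem stmt13 (a : S) :
    ((∃ b, a * b * a = a ∧ b * a * b = b ∧ a * b = b * a) ↔ (∃ b, invAlong a a b)) ∧
    (∀ b, invAlong a a b → (a * b * a = a ∧ b * a * b = b ∧ a * b = b * a)) := by
  refine ⟨⟨?_, ?_⟩, fun b h => invAlong_group a b h⟩
  · rintro ⟨b, h1, h2, h3⟩
    refine ⟨b, ?_, ?_, ⟨b * b, ?_⟩, ⟨b * b, ?_⟩⟩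
    · rw [← h3, h1]
    · rw [mul_assoc, h3, ← mul_assoc, h1]
    · exact (by rw [← mul_assoc, h3, h2] : a * (b * b) = b).symm
    · exact (by rw [mul_assoc, ← h3, ← mul_assoc, h2] : b * b * a = b).symm
  · rintro ⟨b, hb⟩
    obtain ⟨g1, g2, g3⟩ := invAlong_group a b hb
    exact ⟨b, g1, g2, g3⟩
end

section
/- Let S be a semigroup and a ∈ S. Then a has a Drazin inverse (b with ab = ba, a^m = a^{m+1}b for some m ≥ 1, and b = b²a) if and only if a is invertible along a^m for some m ≥ 1, and in that case the Drazin inverse equals the inverse of a along a^m. -/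
variable {S : Type*} [Semigroup S]

/-- `spow a n = a ^ (n + 1)` in the semigroup `S`. -/
def spow (a : S) : ℕ → S
  | 0 => a
  | n + 1 => spow a n * a

/-- `b` is a Drazin inverse of `a`: `ab = ba`, `b = b²a`, `a^m = a^{m+1} b` for some `m ≥ 1`. -/
def isDrazin (a b : S) : Prop :=
  a * b = b * a ∧ b = b * b * a ∧ ∃ m : ℕ, spow a m = spow a (m + 1) * b

lemma spow_succ' (a : S) (n : ℕ) : spow a (n + 1) = spow a n * a := rfl

lemma spow_comm_self (a : S) (n : ℕ) : a * spow a n = spow a n * a := by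
  induction n with
  | zero => rfl
  | succ n ih => rw [spow_succ', ← mul_assoc, ih]

lemma spow_comm {a b : S} (h : a * b = b * a) (n : ℕ) :
    spow a n * b = b * spow a n := by
  induction n with
  | zero => simpa [spow] using h
  | succ n ih => rw [spow_succ', mul_assoc, h, ← mul_assoc, ih, mul_assoc]


lemma spow_mul {a b : S} (h : a * b = b * a) (n : ℕ) :
    spow a n * spow b n = spow (a * b) n := by
  induction n with
  | zero => rfl
  | succ n ih =>
    have hc : a * spow b n = spow b n * a := (spow_comm h.symm n).symm
    calc spow a (n+1) * spow b (n+1)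
        = spow a n * (a * (spow b n * b)) := by rw [spow_succ', spow_succ', mul_assoc]
      _ = spow a n * ((a * spow b n) * b) := by rw [mul_assoc]
      _ = spow a n * ((spow b n * a) * b) := by rw [hc]
      _ = spow a n * (spow b n * (a * b)) := by rw [mul_assoc]
      _ = (spow a n * spow b n) * (a * b) := by rw [mul_assoc]
      _ = spow (a*b) n * (a*b) := by rw [ih]
      _ = spow (a*b) (n+1) := rfl

lemma spow_idem {e : S} (h : e * e = e) (n : ℕ) : spow e n = e := by
  induction n with
  | zero => rfl
  | succ n ih => rw [spow_succ', ih, h]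

/-- `b = b^{n+2} a^{n+1}` for a Drazin-type inverse. -/
lemma drazin_pow {a b : S} (hc : a * b = b * a) (hb : b = b * b * a) (n : ℕ) :
    b = spow b (n + 1) * spow a n := by
  induction n with
  | zero => exact hb
  | succ n ih =>
    calc b = (b * b) * a := hb
      _ = b * (b * a) := by rw [mul_assoc]
      _ = (spow b (n+1) * spow a n) * (b * a) := by rw [← ih]
      _ = spow b (n+1) * (spow a n * (b * a)) := by rw [mul_assoc]
      _ = spow b (n+1) * ((spow a n * b) * a) := by rw [mul_assoc]
      _ = spow b (n+1) * ((b * spow a n) * a) := by rw [spow_comm hc n]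
      _ = spow b (n+1) * (b * (spow a n * a)) := by rw [mul_assoc]
      _ = (spow b (n+1) * b) * (spow a n * a) := by rw [mul_assoc]
      _ = spow b (n+2) * spow a (n+1) := rfl

lemma witness_mono {a b : S} (hc : a * b = b * a) {k : ℕ}
    (hk : spow a k = spow a (k + 1) * b) (j : ℕ) :
    spow a (k + j) = spow a (k + j + 1) * b := by
  induction j with
  | zero => exact hk
  | succ j ih =>
    have : spow a (k + j + 1) = spow a (k + j) * a := rfl
    rw [show k + (j+1) = (k + j) + 1 from rfl, spow_succ', ih, mul_assoc,
      ← hc, ← mul_assoc, ← spow_succ']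

/-- The inverse along `a^{m+1}` is a Drazin inverse. -/
lemma invAlong_isDrazin {a c : S} {m : ℕ} (h : invAlong a (spow a m) c) :
    isDrazin a c := by
  obtain ⟨h1, h2, ⟨s, hs⟩, ⟨t, ht⟩⟩ := h
  -- h2' : spow a (m+1) * c = spow a m
  have h2' : spow a (m + 1) * c = spow a m := h2
  -- h1' : c * spow a (m+1) = spow a m
  have h1' : c * spow a (m + 1) = spow a m := by
    rw [spow_succ', ← spow_comm_self, ← mul_assoc, h1]
  have hac : a * c = spow a (m + 1) * s := by
    rw [hs, ← mul_assoc, spow_comm_self, ← spow_succ']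
  have hca : c * a = t * spow a (m + 1) := by
    rw [ht, mul_assoc, ← spow_succ']
  -- key1 : c * a * spow a (m+1) = spow a (m+1)
  have key1 : c * a * spow a (m + 1) = spow a (m + 1) := by
    rw [spow_succ', ← mul_assoc, mul_assoc c, ← mul_assoc c, h1]
  -- key2 : spow a (m+1) * (a * c) = spow a (m+1)
  have key2 : spow a (m + 1) * (a * c) = spow a (m + 1) := by
    rw [← mul_assoc, ← spow_succ', spow_succ' a (m+1), ← spow_comm_self,
      mul_assoc, h2', spow_comm_self, ← spow_succ']
  have comm : a * c = c * a := by
    have e1 : c * a * (a * c) = a * c := by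
      rw [hac, ← mul_assoc, key1]
    have e2 : c * a * (a * c) = c * a := by
      rw [hca, mul_assoc, key2]
    rw [← e1, e2]
  have hcac : c * a * c = c := by
    nth_rewrite 2 [hs]
    rw [← mul_assoc, h1, ← hs]
  have hcca : c = c * c * a := by
    rw [mul_assoc, ← comm, ← mul_assoc, hcac]
  refine ⟨comm, hcca, m + 1, ?_⟩
  rw [spow_succ' a (m+1), mul_assoc]
  exact key2.symm

/-- Drazin inverses are unique. -/
lemma drazin_unique {a b c : S} (hB : isDrazin a b) (hC : isDrazin a c) :
    b = c := by
  obtain ⟨cb, hb, k, hk⟩ := hB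
  obtain ⟨cc, hc, k', hk'⟩ := hC
  set n := k + k' with hn
  have hbn : spow a n = spow a (n + 1) * b := witness_mono cb hk k'
  have hcn : spow a n = spow a (n + 1) * c := by
    have := witness_mono cc hk' k
    rwa [Nat.add_comm k' k] at this
  have pb : b = spow b (n + 1) * spow a n := drazin_pow cb hb n
  have pc : c = spow c (n + 1) * spow a n := drazin_pow cc hc n
  -- idempotents
  have iba : (b * a) * (b * a) = b * a := by
    calc (b * a) * (b * a) = b * (a * (b * a)) := by rw [mul_assoc]
      _ = b * ((a * b) * a) := by rw [mul_assoc]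
      _ = b * ((b * a) * a) := by rw [cb]
      _ = ((b * b) * a) * a := by simp only [mul_assoc]
      _ = b * a := by rw [← hb]
  have iab : (a * b) * (a * b) = a * b := by
    calc (a * b) * (a * b) = a * (b * (a * b)) := by rw [mul_assoc]
      _ = a * (b * (b * a)) := by rw [cb]
      _ = a * (b * b * a) := by simp only [mul_assoc]
      _ = a * b := by rw [← hb]
  have ica : (c * a) * (c * a) = c * a := by
    calc (c * a) * (c * a) = c * (a * (c * a)) := by rw [mul_assoc]
      _ = c * ((a * c) * a) := by rw [mul_assoc]
      _ = c * ((c * a) * a) := by rw [cc]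
      _ = ((c * c) * a) * a := by simp only [mul_assoc]
      _ = c * a := by rw [← hc]
  -- c = (c * a) * b
  have hc2 : c = (c * a) * b := by
    have h0 : c = spow c (n + 1) * (spow a (n + 1) * b) := by
      rw [← hbn]; exact pc
    rw [← mul_assoc, spow_mul cc.symm (n + 1), spow_idem ica (n + 1)] at h0
    exact h0
  -- b = c * (a * b)
  have pbl : b = spow a n * spow b (n + 1) := by
    rw [(spow_comm (spow_comm cb.symm (n + 1)).symm n)]
    exact pb
  have hcn' : c * spow a (n + 1) = spow a n := by
    rw [← spow_comm cc (n + 1)]; exact hcn.symm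
  have hb2 : b = c * (a * b) := by
    calc b = spow a n * spow b (n + 1) := pbl
      _ = (c * spow a (n + 1)) * spow b (n + 1) := by rw [hcn']
      _ = c * (spow a (n + 1) * spow b (n + 1)) := by rw [mul_assoc]
      _ = c * spow (a * b) (n + 1) := by rw [spow_mul cb (n + 1)]
      _ = c * (a * b) := by rw [spow_idem iab (n + 1)]
  calc b = c * (a * b) := hb2
    _ = (c * a) * b := by rw [mul_assoc]
    _ = c := hc2.symm

theorem stmt14 (a : S) :
    ((∃ b, isDrazin a b) ↔ (∃ (m : ℕ) (b : S), invAlong a (spow a m) b)) ∧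
    (∀ (b : S) (m : ℕ) (c : S), isDrazin a b → invAlong a (spow a m) c → b = c) := by
  constructor
  · constructor
    · rintro ⟨b, cb, hb, m, hm⟩
      refine ⟨m, b, ?_, ?_, ?_, ?_⟩
      · calc b * a * spow a m = b * (a * spow a m) := by rw [mul_assoc]
          _ = b * (spow a m * a) := by rw [spow_comm_self]
          _ = b * spow a (m + 1) := rfl
          _ = spow a (m + 1) * b := (spow_comm cb (m + 1)).symm
          _ = spow a m := hm.symm
      · exact hm.symm
      · exact ⟨spow b (m + 1),
          (drazin_pow cb hb m).trans
            (spow_comm (spow_comm cb.symm (m + 1)).symm m).symm⟩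
      · exact ⟨spow b (m + 1), drazin_pow cb hb m⟩
    · rintro ⟨m, c, h⟩
      exact ⟨c, invAlong_isDrazin h⟩
  · intro b m c hD hI
    exact drazin_unique hD (invAlong_isDrazin hI)
end

section
/- Let S be a *-semigroup (semigroup with involution) and a ∈ S. Then a has a Moore-Penrose inverse if and only if a is invertible along a*, and in that case the inverse along a* is inner and equals the Moore-Penrose inverse. -/
variable {S : Type*} [Semigroup S]

/-- `b` is a Moore-Penrose inverse of `a` in a `*`-semigroup. -/
def isMP [StarMul S] (a b : S) : Prop :=
  a * b * a = a ∧ b * a * b = b ∧ star (a * b) = a * b ∧ star (b * a) = b * a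

theorem stmt15 [StarMul S] (a : S) :
    ((∃ b, isMP a b) ↔ (∃ b, invAlong a (star a) b)) ∧
    (∀ b, invAlong a (star a) b → (a * b * a = a ∧ isMP a b)) := by
  have key : ∀ b, invAlong a (star a) b → (a * b * a = a ∧ isMP a b) := by
    rintro b ⟨h1, h2, ⟨s, hs⟩, ⟨t, ht⟩⟩
    -- h1 : b * a * star a = star a, h2 : star a * a * b = star a
    have e1 : star b * (star a * a) = a := by
      have := congrArg star h2
      simpa [star_mul, mul_assoc] using this
    have e2 : a * (star a * star b) = a := by
      have := congrArg star h1
      simpa [star_mul, mul_assoc] using this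
    have hab : star (a * b) = a * b := by
      have : a * b = star b * star a := by
        calc a * b = (star b * (star a * a)) * b := by rw [e1]
          _ = star b * (star a * a * b) := by simp [mul_assoc]
          _ = star b * star a := by rw [h2]
      rw [this]; simpa [star_mul] using this
    have hba : star (b * a) = b * a := by
      have : b * a = star a * star b := by
        calc b * a = b * (a * (star a * star b)) := by rw [e2]
          _ = (b * a * star a) * star b := by simp [mul_assoc]
          _ = star a * star b := by rw [h1]
      rw [this]; simpa [star_mul] using this
    have haba : a * b * a = a := by
      calc a * b * a = star b * (star a * a) * b * a := by rw [e1]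
        _ = star b * (star a * a * b) * a := by simp [mul_assoc]
        _ = star b * (star a * a) := by rw [h2]; simp [mul_assoc]
        _ = a := e1
    have hbab : b * a * b = b := by
      calc b * a * b = t * (star a * a * b) := by rw [ht]; simp [mul_assoc]
        _ = t * star a := by rw [h2]
        _ = b := ht.symm
    exact ⟨haba, haba, hbab, hab, hba⟩
  refine ⟨⟨?_, fun ⟨b, hb⟩ => ⟨b, (key b hb).2⟩⟩, key⟩
  rintro ⟨b, h1, h2, h3, h4⟩
  have hab' : a * b = star b * star a := by rw [← h3, star_mul]
  have hba' : b * a = star a * star b := by rw [← h4, star_mul]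
  refine ⟨b, ?_, ?_, ⟨star b * b, ?_⟩, ⟨b * star b, ?_⟩⟩
  · calc b * a * star a = star a * star b * star a := by rw [hba']
      _ = star (a * (b * a)) := by simp [star_mul, mul_assoc]
      _ = star a := by rw [show a * (b * a) = a from by rw [← mul_assoc, h1]]
  · calc star a * a * b = star a * (a * b) := by rw [mul_assoc]
      _ = star a * (star b * star a) := by rw [hab']
      _ = star (a * b * a) := by simp [star_mul, mul_assoc]
      _ = star a := by rw [h1]
  · calc b = b * a * b := h2.symm
      _ = star a * star b * b := by rw [hba']
      _ = star a * (star b * b) := by rw [mul_assoc]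
  · calc b = b * (a * b) := by rw [← mul_assoc]; exact h2.symm
      _ = b * (star b * star a) := by rw [hab']
      _ = b * star b * star a := by rw [← mul_assoc]
end

section
/- Let S be a semigroup and a ∈ S. A group inverse of a exists if and only if a² H a (a² and a are Green H-related), and in that case the group inverse a^♯ lies in the bicommutant of {a}. -/
variable {S : Type*} [Semigroup S]

theorem stmt17 (a : S) :
    ((∃ b, a * b * a = a ∧ b * a * b = b ∧ a * b = b * a) ↔ hrel (a * a) a) ∧
    (∀ b, (a * b * a = a ∧ b * a * b = b ∧ a * b = b * a) →
      ∀ c, c * a = a * c → c * b = b * c) := by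
  constructor
  · constructor
    · rintro ⟨b, h1, h2, h3⟩
      refine ⟨⟨Or.inr ⟨a, rfl⟩, Or.inr ⟨b, ?_⟩⟩, Or.inr ⟨a, rfl⟩, Or.inr ⟨b, ?_⟩⟩
      · calc a = a * b * a := h1.symm
          _ = b * a * a := by rw [h3]
          _ = b * (a * a) := mul_assoc ..
      · calc a = a * b * a := h1.symm
          _ = a * (b * a) := mul_assoc ..
          _ = a * (a * b) := by rw [h3]
          _ = a * a * b := (mul_assoc ..).symm
    · rintro ⟨⟨-, hl⟩, -, hr⟩
      obtain ⟨s, hs⟩ : ∃ s, a = s * (a * a) := by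
        rcases hl with h | h
        · exact ⟨a, by rw [← h]; exact h⟩
        · exact h
      obtain ⟨t, ht⟩ : ∃ t, a = (a * a) * t := by
        rcases hr with h | h
        · exact ⟨a, by rw [← h]; exact h⟩
        · exact h
      have key1 : s * a = a * t := by
        have h' : s * a = (s * (a * a)) * t := by
          rw [mul_assoc]; exact congrArg (s * ·) ht
        rw [← hs] at h'; exact h'
      have asa : a * (s * a) = a := by rw [key1, ← mul_assoc, ← ht]
      have ata : (a * t) * a = a := by rw [← key1, mul_assoc, ← hs]
      refine ⟨s * a * t, ?_, ?_, ?_⟩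
      · -- a * (s*a*t) * a = a
        have hab : a * (s * a * t) = a * t := by
          rw [← mul_assoc, asa]
        rw [hab, ata]
      · -- (s*a*t) * a * (s*a*t) = s*a*t
        have hba : (s * a * t) * a = s * a := by
          rw [mul_assoc s a t, mul_assoc, ata]
        rw [hba, mul_assoc s a (s * a * t), ← mul_assoc a (s * a) t, asa,
          mul_assoc]
      · -- a * (s*a*t) = (s*a*t) * a
        have hab : a * (s * a * t) = a * t := by
          rw [← mul_assoc, asa]
        have hba : (s * a * t) * a = s * a := by
          rw [mul_assoc s a t, mul_assoc, ata]
        rw [hab, hba, key1]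
  · rintro b ⟨h1, h2, h3⟩ c hc
    have f1 : a * (b * a) = a := by rw [← mul_assoc, h1]
    have f2 : b * (a * b) = b := by rw [← mul_assoc, h2]
    have ec : (a * b) * c = b * (c * a) := by rw [h3, mul_assoc, hc]
    have ce : c * (a * b) = a * (c * b) := by rw [← mul_assoc c a b, hc, mul_assoc]
    have g1 : ((a * b) * c) * (b * a) = (a * b) * c := by
      rw [ec, mul_assoc, mul_assoc, f1]
    have g2 : (a * b) * (c * (a * b)) = c * (a * b) := by
      rw [ce, ← mul_assoc, h1]
    have ecom : (a * b) * c = c * (a * b) := by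
      calc (a * b) * c = ((a * b) * c) * (b * a) := g1.symm
        _ = ((a * b) * c) * (a * b) := by rw [h3]
        _ = (a * b) * (c * (a * b)) := by rw [mul_assoc]
        _ = c * (a * b) := g2
    have : b * c = c * b := by
      calc b * c = (b * (a * b)) * c := by rw [f2]
        _ = b * ((a * b) * c) := by rw [mul_assoc]
        _ = b * (c * (a * b)) := by rw [ecom]
        _ = b * ((c * a) * b) := by rw [mul_assoc c a b]
        _ = b * ((a * c) * b) := by rw [hc]
        _ = (b * (a * c)) * b := by rw [← mul_assoc]
        _ = ((b * a) * c) * b := by rw [← mul_assoc b a c]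
        _ = ((a * b) * c) * b := by rw [h3]
        _ = (c * (a * b)) * b := by rw [ecom]
        _ = c * ((a * b) * b) := by rw [mul_assoc]
        _ = c * ((b * a) * b) := by rw [h3]
        _ = c * b := by rw [h2]
    exact this.symm
end

section
/- Let R be a ring with involution * and a ∈ R. If aR = a*R, then a has a Moore-Penrose inverse if and only if a has a group inverse, and in that case a⁺ = a^♯. -/
/-- If `a` is Moore–Penrose invertible with inverse `b` and `aR = a*R`
(witnessed by `s`, `t`), then `ab = ba`, `a²b = a` and `ba² = a`. -/
lemma stmt18_aux {R : Type*} [Ring R] [StarRing R] (a b s t : R)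
    (hs : a = star a * s) (ht : star a = a * t)
    (h1 : a * b * a = a) (h2 : b * a * b = b)
    (h3 : star (a * b) = a * b) (h4 : star (b * a) = b * a) :
    a * b = b * a ∧ a * a * b = a ∧ b * a * a = a := by
  -- (ab) a* = a*
  have e1 : a * b * star a = star a := by
    rw [ht, ← mul_assoc, h1]
  -- a (ab) = a, i.e. a² b = a
  have e2 : a * (a * b) = a := by
    have h' := congrArg star e1
    rw [star_mul, star_star, h3] at h'
    exact h'
  have e2' : a * a * b = a := by rw [mul_assoc]; exact e2
  -- (ba) a* = a*
  have e3 : b * a * star a = star a := by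
    have h1' : a * (b * a) = a := by rw [← mul_assoc]; exact h1
    have h' := congrArg star h1'
    rw [star_mul, h4] at h'
    exact h'
  -- b a² = a
  have e4 : b * a * a = a := by
    calc b * a * a = b * a * (star a * s) := by rw [← hs]
      _ = b * a * star a * s := by simp only [mul_assoc]
      _ = star a * s := by rw [e3]
      _ = a := hs.symm
  -- ab = ba
  have l1 : b * a * (a * b) = a * b := by rw [← mul_assoc, e4]
  have l2 : b * a * (a * b) = b * a := by rw [mul_assoc, e2]
  exact ⟨l1.symm.trans l2, e2', e4⟩

theorem stmt18 {R : Type*} [Ring R] [StarRing R] (a : R)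
    (h : {x : R | ∃ r, x = a * r} = {x : R | ∃ r, x = star a * r}) :
    ((∃ b, a * b * a = a ∧ b * a * b = b ∧ star (a * b) = a * b ∧ star (b * a) = b * a) ↔
      (∃ b, a * b * a = a ∧ b * a * b = b ∧ a * b = b * a)) ∧
    (∀ b c, (a * b * a = a ∧ b * a * b = b ∧ star (a * b) = a * b ∧ star (b * a) = b * a) →
      (a * c * a = a ∧ c * a * c = c ∧ a * c = c * a) → b = c) := by
  obtain ⟨s, hs⟩ : ∃ r, a = star a * r := by
    have ha : a ∈ {x : R | ∃ r, x = a * r} := ⟨1, (mul_one a).symm⟩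
    rw [h] at ha
    exact ha
  obtain ⟨t, ht⟩ : ∃ r, star a = a * r := by
    have ha : star a ∈ {x : R | ∃ r, x = star a * r} := ⟨1, (mul_one _).symm⟩
    rw [← h] at ha
    exact ha
  constructor
  · constructor
    · rintro ⟨b, h1, h2, h3, h4⟩
      obtain ⟨comm, -, -⟩ := stmt18_aux a b s t hs ht h1 h2 h3 h4
      exact ⟨b, h1, h2, comm⟩
    · rintro ⟨c, g1, g2, g3⟩
      -- show c is a Moore–Penrose inverse
      have ap : a * (a * c) = a := by rw [g3, ← mul_assoc, g1]
      have f : star (a * c) * star a = star a := by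
        have h' := congrArg star ap
        rwa [star_mul] at h'
      have hp : a * c = star a * (s * c) := by
        conv_lhs => rw [hs, mul_assoc]
      have key : star (a * c) * (a * c) = a * c := by
        nth_rewrite 2 [hp]
        rw [← mul_assoc, f, ← hp]
      have sym : star (a * c) = a * c := by
        have h' := congrArg star key
        rw [star_mul, star_star] at h'
        exact h'.symm.trans key
      refine ⟨c, g1, g2, sym, ?_⟩
      rw [← g3]
      exact sym
  · rintro b c ⟨h1, h2, h3, h4⟩ ⟨g1, g2, g3⟩
    obtain ⟨comm, e2, e4⟩ := stmt18_aux a b s t hs ht h1 h2 h3 h4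
    have a2c : a * a * c = a := by rw [mul_assoc, g3, ← mul_assoc, g1]
    have ba_ac : b * a = a * c := by
      calc b * a = b * (a * a * c) := by rw [a2c]
        _ = b * a * a * c := by simp only [mul_assoc]
        _ = a * c := by rw [e4]
    have ab_ca : a * b = c * a := comm.trans (ba_ac.trans g3)
    have ac_ab : a * c = a * b := ba_ac.symm.trans comm.symm
    have : c = b := by
      calc c = c * a * c := g2.symm
        _ = c * (a * c) := by simp only [mul_assoc]
        _ = c * (a * b) := by rw [ac_ab]
        _ = c * a * b := by simp only [mul_assoc]
        _ = a * b * b := by rw [← ab_ca]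
        _ = b * a * b := by rw [comm]
        _ = b := h2
    exact this.symm
end

section
/- Let R be a ring with involution * and a ∈ R. If a has both a Moore-Penrose inverse a⁺ and a group inverse a^♯ and a⁺ = a^♯, then aR = a*R. -/
theorem stmt19 {R : Type*} [Ring R] [StarRing R] (a b c : R)
    (hMP : a * b * a = a ∧ b * a * b = b ∧ star (a * b) = a * b ∧ star (b * a) = b * a)
    (hGI : a * c * a = a ∧ c * a * c = c ∧ a * c = c * a)
    (heq : b = c) :
    {x : R | ∃ r, x = a * r} = {x : R | ∃ r, x = star a * r} := by
  obtain ⟨h1, h2, h3, h4⟩ := hMP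
  obtain ⟨_, _, hcomm⟩ := hGI
  subst heq
  have hba : b * a = star a * star b := by
    conv_lhs => rw [← h4]
    rw [star_mul]
  have key1 : a = star a * (star b * a) := by
    calc a = a * b * a := h1.symm
    _ = b * a * a := by rw [hcomm]
    _ = star a * (star b * a) := by rw [hba, mul_assoc]
  have hb : b = a * (b * b) := by
    calc b = b * a * b := h2.symm
    _ = a * b * b := by rw [← hcomm]
    _ = a * (b * b) := by rw [mul_assoc]
  have key2 : star a = a * (b * (b * (a * star a))) := by
    have h5 : star a = b * (a * star a) := by
      conv_lhs => rw [← h1, mul_assoc, star_mul, h4, mul_assoc]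
    calc star a = b * (a * star a) := h5
    _ = a * (b * b) * (a * star a) := by rw [← hb]
    _ = a * (b * (b * (a * star a))) := by simp only [mul_assoc]
  ext x
  simp only [Set.mem_setOf_eq]
  constructor
  · rintro ⟨r, rfl⟩
    refine ⟨star b * a * r, ?_⟩
    calc a * r = (star a * (star b * a)) * r := by rw [← key1]
    _ = star a * (star b * a * r) := by simp only [mul_assoc]
  · rintro ⟨r, rfl⟩
    refine ⟨b * (b * (a * star a)) * r, ?_⟩
    calc star a * r = (a * (b * (b * (a * star a)))) * r := by rw [← key2]
    _ = a * (b * (b * (a * star a)) * r) := by simp only [mul_assoc]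
end
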